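/- Let N₁, N₂, W₁, W₂ be positive integers, let τ, ρ ∈ ℂ with Im τ > 0 and Im ρ > 0, and let p, q, t be real numbers with p > 0 and q > 0 such that pτ = qρ + t. Then the following are equivalent. (i) There exist integers α, β, γ, δ, α′, β′, γ′, δ′ with αδ − βγ = 1 and α′δ′ − β′γ′ = 1 such that (N₁W₂/(pN₂W₁))·(qρ + t) = (α′ρ + β′)/(γ′ρ + δ′) and (W₁W₂/(qN₁N₂))·(pτ − t) = (ατ + β)/(γτ + δ). (ii) There exist integers x₀, y₀, x₀′, y₀′ satisfying p(N₂W₁)²x₀² − 2pN₁N₂W₁W₂(Re τ)x₀y₀ + p(N₁W₂)²|τ|²y₀² = qN₁N₂W₁W₂ and q(N₁N₂)²x₀′² − 2qN₁N₂W₁W₂(Re ρ)x₀′y₀′ + q(W₁W₂)²|ρ|²y₀′² = pN₁N₂W₁W₂, such that the four real numbers z₀ = (t/q)x₀ − (pN₁W₂/(qN₂W₁))|τ|²y₀, w₀ = −(2(Re ρ) + t/q)y₀ + (pN₂W₁/(qN₁W₂))x₀, z₀′ = −(t/p)x₀′ − (qW₁W₂/(pN₁N₂))|ρ|²y₀′,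 w₀′ = −(2(Re τ) − t/p)y₀′ + (qN₁N₂/(pW₁W₂))x₀′ are all integers. -/

import Mathlib

lemma denom_ne_zero (ρ : ℂ) (hρ : 0 < ρ.im) (a b c d : ℤ) (hdet : a * d - b * c = 1) :
    (c : ℂ) * ρ + (d : ℂ) ≠ 0 := by
  intro h
  have h1 : (c : ℝ) * ρ.im = 0 := by
    have := congrArg Complex.im h
    simpa using this
  have hc : (c : ℝ) = 0 := by
    rcases mul_eq_zero.mp h1 with h' | h'
    · exact h'
    · exact absurd h' (ne_of_gt hρ)
  have hcz : c = 0 := by exact_mod_cast hc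
  have h2 : (c : ℝ) * ρ.re + (d : ℝ) = 0 := by
    have := congrArg Complex.re h
    simpa using this
  have hdz : d = 0 := by
    have : (d : ℝ) = 0 := by rw [hc] at h2; linarith
    exact_mod_cast this
  rw [hcz, hdz] at hdet
  simp at hdet

lemma duality_core (k₁ k₂ : ℝ) (hk₁ : 0 < k₁) (hk₂ : 0 < k₂) (τ ρ : ℂ)
    (hτ : 0 < τ.im) (hρ : 0 < ρ.im) (p q t : ℝ) (hp : 0 < p) (hq : 0 < q)
    (hrel : (p : ℂ) * τ = (q : ℂ) * ρ + (t : ℂ)) :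
    (∃ a b c d : ℤ, a * d - b * c = 1 ∧
        ((k₁ : ℂ) / ((p : ℂ) * (k₂ : ℂ))) * ((q : ℂ) * ρ + (t : ℂ)) =
          ((a : ℂ) * ρ + b) / ((c : ℂ) * ρ + d)) ↔
    (∃ x₀ y₀ : ℤ,
        p * k₂^2 * x₀^2 - 2 * p * (k₁ * k₂) * τ.re * (x₀ * y₀)
            + p * k₁^2 * ‖τ‖^2 * y₀^2 = q * (k₁ * k₂) ∧
        (∃ z₀ : ℤ, (z₀ : ℝ) =
          (t / q) * x₀ - (p * k₁ / (q * k₂)) * ‖τ‖^2 * y₀) ∧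
        (∃ w₀ : ℤ, (w₀ : ℝ) =
          -(2 * ρ.re + t / q) * y₀ + (p * k₂ / (q * k₁)) * x₀)) := by
  have hp0 : p ≠ 0 := ne_of_gt hp
  have hq0 : q ≠ 0 := ne_of_gt hq
  have hk₁0 : k₁ ≠ 0 := ne_of_gt hk₁
  have hk₂0 : k₂ ≠ 0 := ne_of_gt hk₂
  have hv : ρ.im ≠ 0 := ne_of_gt hρ
  have hqk₂ : q * k₂ ≠ 0 := by positivity
  have hqk₁ : q * k₁ ≠ 0 := by positivity
  have hpk : (p : ℂ) * (k₂ : ℂ) ≠ 0 := by simp [hp0, hk₂0]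
  have hx : p * τ.re = q * ρ.re + t := by
    have h := congrArg Complex.re hrel; simpa using h
  have hy : p * τ.im = q * ρ.im := by
    have h := congrArg Complex.im hrel; simpa using h
  have habs : ‖τ‖^2 = τ.re^2 + τ.im^2 := by
    rw [Complex.sq_norm, Complex.normSq_apply]; ring
  have hmin : ρ^2 = 2 * (ρ.re : ℂ) * ρ - (((ρ.re : ℝ) : ℂ)^2 + ((ρ.im : ℝ) : ℂ)^2) := by
    have h := Complex.re_add_im ρ
    have hI := Complex.I_sq
    linear_combination (-(ρ - (ρ.re : ℂ) + (ρ.im : ℂ) * Complex.I)) * h + ((ρ.im : ℂ)^2) * hI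
  -- single-fraction rewrites for the z/w formulas
  have splitz : ∀ A C : ℝ,
      (t / q) * A - (p * k₁ / (q * k₂)) * (τ.re^2 + τ.im^2) * C =
        (t * k₂ * A - p * k₁ * (τ.re^2 + τ.im^2) * C) / (q * k₂) := by
    intro A C; field_simp
  have splitw : ∀ A C : ℝ,
      -(2 * ρ.re + t / q) * C + (p * k₂ / (q * k₁)) * A =
        (-(2 * ρ.re * q + t) * k₁ * C + p * k₂ * A) / (q * k₁) := by
    intro A C; field_simp
  constructor
  · rintro ⟨a, b, c, d, hdet, heq⟩
    have hdetR : (a : ℝ) * d - (b : ℝ) * c = 1 := by exact_mod_cast hdet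
    have hD : (c : ℂ) * ρ + (d : ℂ) ≠ 0 := denom_ne_zero ρ hρ a b c d hdet
    have key : (k₁ : ℂ) * ((q : ℂ) * ρ + (t : ℂ)) * ((c : ℂ) * ρ + d) =
        ((a : ℂ) * ρ + b) * ((p : ℂ) * (k₂ : ℂ)) := by
      rw [div_mul_eq_mul_div, div_eq_div_iff hpk hD] at heq
      exact heq
    have key2 : ((k₁ * (2 * q * (c : ℝ) * ρ.re + t * c + q * d) - p * k₂ * a : ℝ) : ℂ) * ρ =
        ((p * k₂ * (b : ℝ) - k₁ * (t * d - q * c * (ρ.re ^ 2 + ρ.im ^ 2)) : ℝ) : ℂ) := by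
      push_cast
      linear_combination key - (q * k₁ * (c : ℂ)) * hmin
    have e1 : k₁ * (2 * q * (c : ℝ) * ρ.re + t * c + q * d) - p * k₂ * a = 0 := by
      have h := congrArg Complex.im key2
      rw [Complex.im_ofReal_mul, Complex.ofReal_im] at h
      exact (mul_eq_zero.mp h).resolve_right hv
    have hF1 : k₁ * (2 * q * (c : ℝ) * ρ.re + t * c + q * d) = p * k₂ * (a : ℝ) := by
      linarith
    have hF2 : k₁ * (t * (d : ℝ) - q * c * (ρ.re ^ 2 + ρ.im ^ 2)) = p * k₂ * (b : ℝ) := by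
      have h := congrArg Complex.re key2
      rw [Complex.re_ofReal_mul, Complex.ofReal_re, e1, zero_mul] at h
      linarith
    have hz0 : q * k₂ * (b : ℝ) = t * k₂ * a - p * k₁ * (τ.re^2 + τ.im^2) * (c : ℝ) := by
      have h2 : p * (q * k₂ * (b : ℝ)) =
          p * (t * k₂ * a - p * k₁ * (τ.re^2 + τ.im^2) * (c : ℝ)) := by
        linear_combination t * hF1 - q * hF2
          + (k₁ * (c : ℝ) * (p * τ.re + q * ρ.re + t)) * hx
          + (k₁ * (c : ℝ) * (p * τ.im + q * ρ.im)) * hy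
      exact mul_left_cancel₀ hp0 h2
    refine ⟨a, c, ?_, ⟨b, ?_⟩, ⟨d, ?_⟩⟩
    · rw [habs]
      have hQ' : p * (p * k₂^2 * (a : ℝ)^2 - 2 * p * (k₁ * k₂) * τ.re * ((a : ℝ) * c)
            + p * k₁^2 * (τ.re^2 + τ.im^2) * (c : ℝ)^2) = p * (q * (k₁ * k₂)) := by
        linear_combination
          (-(p * k₂ * (a : ℝ) - k₁ * (2 * q * (c : ℝ) * ρ.re + t * c + q * d))
              - 2 * q * k₁ * ((c : ℝ) * ρ.re + d) + q * k₁ * d) * hF1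
          - (q * k₁ * (c : ℝ)) * hF2
          + (p * q * k₁ * k₂) * hdetR
          + (k₁^2 * (c : ℝ)^2 * (p * τ.re + q * ρ.re + t) - 2 * p * k₁ * k₂ * a * c) * hx
          + (k₁^2 * (c : ℝ)^2 * (p * τ.im + q * ρ.im)) * hy
      have := mul_left_cancel₀ hp0 hQ'
      linear_combination this
    · rw [habs, splitz, eq_div_iff hqk₂]
      linear_combination hz0
    · rw [splitw, eq_div_iff hqk₁]
      linear_combination hF1
  · rintro ⟨a, c, hQ, ⟨b, hz⟩, ⟨d, hw⟩⟩
    rw [habs] at hQ hz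
    rw [splitz, eq_div_iff hqk₂] at hz
    rw [splitw, eq_div_iff hqk₁] at hw
    have hF1 : k₁ * (2 * q * (c : ℝ) * ρ.re + t * c + q * d) = p * k₂ * (a : ℝ) := by
      linear_combination hw
    have hF2 : k₁ * (t * (d : ℝ) - q * c * (ρ.re ^ 2 + ρ.im ^ 2)) = p * k₂ * (b : ℝ) := by
      have h2 : q * (k₁ * (t * (d : ℝ) - q * c * (ρ.re ^ 2 + ρ.im ^ 2))) =
          q * (p * k₂ * (b : ℝ)) := by
        linear_combination t * hF1 - p * hz
          + (k₁ * (c : ℝ) * (p * τ.re + q * ρ.re + t)) * hx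
          + (k₁ * (c : ℝ) * (p * τ.im + q * ρ.im)) * hy
      exact mul_left_cancel₀ hq0 h2
    have hdetR : (a : ℝ) * d - (b : ℝ) * c = 1 := by
      have H : (p * q * k₁ * k₂) * ((a : ℝ) * d - (b : ℝ) * c) = (p * q * k₁ * k₂) * 1 := by
        linear_combination p * hQ
          + ((p * k₂ * (a : ℝ) - k₁ * (2 * q * (c : ℝ) * ρ.re + t * c + q * d))
              + 2 * q * k₁ * ((c : ℝ) * ρ.re + d) - q * k₁ * d) * hF1
          + (q * k₁ * (c : ℝ)) * hF2
          - (k₁^2 * (c : ℝ)^2 * (p * τ.re + q * ρ.re + t) - 2 * p * k₁ * k₂ * a * c) * hx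
          - (k₁^2 * (c : ℝ)^2 * (p * τ.im + q * ρ.im)) * hy
      have hne : p * q * k₁ * k₂ ≠ 0 := by positivity
      have := mul_left_cancel₀ hne H
      linarith
    have hdet : a * d - b * c = 1 := by exact_mod_cast hdetR
    have hD : (c : ℂ) * ρ + (d : ℂ) ≠ 0 := denom_ne_zero ρ hρ a b c d hdet
    refine ⟨a, b, c, d, hdet, ?_⟩
    rw [div_mul_eq_mul_div, div_eq_div_iff hpk hD]
    have hF1C := congrArg (Complex.ofReal) hF1
    have hF2C := congrArg (Complex.ofReal) hF2
    push_cast at hF1C hF2C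
    linear_combination (q * k₁ * (c : ℂ)) * hmin + ρ * hF1C + hF2C




/-- Self-duality condition for duality defects of type `(m,i) = (1,0)` (nontrivial mirror
symmetry) in the `c = 2` compact boson CFT with moduli `(τ, ρ)` related by `pτ = qρ + t`,
under orbifolding by `ℤ_{N₁} × ℤ_{N₂} × ℤ_{W₁} × ℤ_{W₂}`. -/
theorem duality_defects_one_zero (N₁ N₂ W₁ W₂ : ℕ) (hN₁ : 0 < N₁) (hN₂ : 0 < N₂)
    (hW₁ : 0 < W₁) (hW₂ : 0 < W₂) (τ ρ : ℂ) (hτ : 0 < τ.im) (hρ : 0 < ρ.im)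
    (p q t : ℝ) (hp : 0 < p) (hq : 0 < q) (hrel : (p : ℂ) * τ = (q : ℂ) * ρ + (t : ℂ)) :
    (∃ α β γ δ α' β' γ' δ' : ℤ,
        α * δ - β * γ = 1 ∧ α' * δ' - β' * γ' = 1 ∧
        ((N₁ * W₂ : ℂ) / ((p : ℂ) * (N₂ * W₁))) * ((q : ℂ) * ρ + (t : ℂ)) =
          ((α' : ℂ) * ρ + β') / ((γ' : ℂ) * ρ + δ') ∧
        ((W₁ * W₂ : ℂ) / ((q : ℂ) * (N₁ * N₂))) * ((p : ℂ) * τ - (t : ℂ)) =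
          ((α : ℂ) * τ + β) / ((γ : ℂ) * τ + δ)) ↔
      (∃ x₀ y₀ x₀' y₀' : ℤ,
        p * ((N₂ * W₁ : ℝ))^2 * x₀^2 - 2 * p * (N₁ * N₂ * W₁ * W₂ : ℝ) * τ.re * (x₀ * y₀)
            + p * ((N₁ * W₂ : ℝ))^2 * ‖τ‖^2 * y₀^2
          = q * (N₁ * N₂ * W₁ * W₂ : ℝ) ∧
        q * ((N₁ * N₂ : ℝ))^2 * x₀'^2 - 2 * q * (N₁ * N₂ * W₁ * W₂ : ℝ) * ρ.re * (x₀' * y₀')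
            + q * ((W₁ * W₂ : ℝ))^2 * ‖ρ‖^2 * y₀'^2
          = p * (N₁ * N₂ * W₁ * W₂ : ℝ) ∧
        (∃ z₀ : ℤ, (z₀ : ℝ) =
          (t / q) * x₀ - (p * (N₁ * W₂ : ℝ) / (q * (N₂ * W₁ : ℝ))) * ‖τ‖^2 * y₀) ∧
        (∃ w₀ : ℤ, (w₀ : ℝ) =
          -(2 * ρ.re + t / q) * y₀ + (p * (N₂ * W₁ : ℝ) / (q * (N₁ * W₂ : ℝ))) * x₀) ∧
        (∃ z₀' : ℤ, (z₀' : ℝ) =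
          -(t / p) * x₀' - (q * (W₁ * W₂ : ℝ) / (p * (N₁ * N₂ : ℝ))) * ‖ρ‖^2 * y₀') ∧
        (∃ w₀' : ℤ, (w₀' : ℝ) =
          -(2 * τ.re - t / p) * y₀' + (q * (N₁ * N₂ : ℝ) / (p * (W₁ * W₂ : ℝ))) * x₀')) := by
  have hN₁' : (0:ℝ) < N₁ := by exact_mod_cast hN₁
  have hN₂' : (0:ℝ) < N₂ := by exact_mod_cast hN₂
  have hW₁' : (0:ℝ) < W₁ := by exact_mod_cast hW₁
  have hW₂' : (0:ℝ) < W₂ := by exact_mod_cast hW₂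
  have hrel2 : (q : ℂ) * ρ = (p : ℂ) * τ + ((-t : ℝ) : ℂ) := by
    push_cast
    linear_combination -hrel
  have core1 := duality_core ((N₁:ℝ)*W₂) ((N₂:ℝ)*W₁) (mul_pos hN₁' hW₂') (mul_pos hN₂' hW₁')
      τ ρ hτ hρ p q t hp hq hrel
  have core2 := duality_core ((W₁:ℝ)*W₂) ((N₁:ℝ)*N₂) (mul_pos hW₁' hW₂') (mul_pos hN₁' hN₂')
      ρ τ hρ hτ q p (-t) hq hp hrel2
  have eL1 : ((N₁ * W₂ : ℂ) / ((p : ℂ) * (N₂ * W₁))) * ((q : ℂ) * ρ + (t : ℂ)) =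
      ((((N₁:ℝ)*W₂ : ℝ) : ℂ) / ((p : ℂ) * (((N₂:ℝ)*W₁ : ℝ) : ℂ))) * ((q : ℂ) * ρ + (t : ℂ)) := by
    norm_cast
  have eL2 : ((W₁ * W₂ : ℂ) / ((q : ℂ) * (N₁ * N₂))) * ((p : ℂ) * τ - (t : ℂ)) =
      ((((W₁:ℝ)*W₂ : ℝ) : ℂ) / ((q : ℂ) * (((N₁:ℝ)*N₂ : ℝ) : ℂ))) * ((p : ℂ) * τ + ((-t : ℝ) : ℂ)) := by
    push_cast
    ring
  constructor
  · rintro ⟨α, β, γ, δ, α', β', γ', δ', hd, hd', h1, h2⟩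
    rw [eL1] at h1
    rw [eL2] at h2
    obtain ⟨x₀, y₀, hQ1, ⟨z₀, hz⟩, ⟨w₀, hw⟩⟩ := core1.mp ⟨α', β', γ', δ', hd', h1⟩
    obtain ⟨x₀', y₀', hQ2, ⟨z₀', hz'⟩, ⟨w₀', hw'⟩⟩ := core2.mp ⟨α, β, γ, δ, hd, h2⟩
    refine ⟨x₀, y₀, x₀', y₀', by push_cast at hQ1 ⊢; linear_combination hQ1,
      by push_cast at hQ2 ⊢; linear_combination hQ2,
      ⟨z₀, by rw [hz]; try (push_cast; ring)⟩, ⟨w₀, by rw [hw]; try (push_cast; ring)⟩,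
      ⟨z₀', by rw [hz']; try (push_cast; ring)⟩, ⟨w₀', by rw [hw']; try (push_cast; ring)⟩⟩
  · rintro ⟨x₀, y₀, x₀', y₀', hQ1, hQ2, ⟨z₀, hz⟩, ⟨w₀, hw⟩, ⟨z₀', hz'⟩, ⟨w₀', hw'⟩⟩
    obtain ⟨α', β', γ', δ', hd', h1⟩ := core1.mpr ⟨x₀, y₀,
      by push_cast at hQ1 ⊢; linear_combination hQ1,
      ⟨z₀, by rw [hz]; try (push_cast; ring)⟩, ⟨w₀, by rw [hw]; try (push_cast; ring)⟩⟩
    obtain ⟨α, β, γ, δ, hd, h2⟩ := core2.mpr ⟨x₀', y₀',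
      by push_cast at hQ2 ⊢; linear_combination hQ2,
      ⟨z₀', by rw [hz']; try (push_cast; ring)⟩, ⟨w₀', by rw [hw']; try (push_cast; ring)⟩⟩
    rw [← eL1] at h1
    rw [← eL2] at h2
    exact ⟨α, β, γ, δ, α', β', γ', δ', hd, hd', h1, h2⟩
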